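/- Suppose Y=Φθ₀+V, Φ∈ℝ^{N×n} has full column rank, P(η)∈ℝ^{n×n} is invertible and Ŝ(η)=P(η)+σ̂²(ΦᵀΦ)⁻¹ is invertible. Then the RLS estimator θ̂^R(η)=(ΦᵀΦ+σ̂²P(η)⁻¹)⁻¹ΦᵀY satisfies the exact decomposition θ̂^R(η) = θ₀ + (ΦᵀΦ)⁻¹ΦᵀV − (1/N)·σ̂²·[N(ΦᵀΦ)⁻¹]·Ŝ(η)⁻¹·θ̂^LS, where θ̂^LS=(ΦᵀΦ)⁻¹ΦᵀY. -/

import Mathlib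

open Matrix

/-- Exact decomposition of the regularized least squares estimator:
`θ̂^R(η) = θ₀ + (ΦᵀΦ)⁻¹ΦᵀV − (1/N) σ̂² [N(ΦᵀΦ)⁻¹] Ŝ(η)⁻¹ θ̂^LS`. -/
theorem stmt6 (n N : ℕ) (hN : 0 < N) (hnN : n < N)
    (Φ : Matrix (Fin N) (Fin n) ℝ) (hrank : Φ.rank = n)
    (θ0 : Fin n → ℝ) (V : Fin N → ℝ) (Y : Fin N → ℝ)
    (hY : Y = Φ *ᵥ θ0 + V)
    (σhat2 : ℝ) (hσhat2 : 0 ≤ σhat2)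
    (P : Matrix (Fin n) (Fin n) ℝ) (hP : IsUnit P.det)
    (hS : IsUnit (P + σhat2 • (Φᵀ * Φ)⁻¹).det) :
    (Φᵀ * Φ + σhat2 • P⁻¹)⁻¹ *ᵥ (Φᵀ *ᵥ Y) =
      θ0 + (Φᵀ * Φ)⁻¹ *ᵥ (Φᵀ *ᵥ V) -
        ((N : ℝ)⁻¹ * σhat2) •
          (((N : ℝ) • (Φᵀ * Φ)⁻¹ * (P + σhat2 • (Φᵀ * Φ)⁻¹)⁻¹) *ᵥ
            ((Φᵀ * Φ)⁻¹ *ᵥ (Φᵀ *ᵥ Y))) := by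
  set A := Φᵀ * Φ with hAdef
  set S := P + σhat2 • A⁻¹ with hSdef
  -- A is invertible
  have hrankA : A.rank = n := by rw [hAdef, Matrix.rank_transpose_mul_self, hrank]
  have hA : IsUnit A.det := by
    rw [← Matrix.isUnit_iff_isUnit_det, ← Matrix.mulVec_injective_iff_isUnit]
    have hrange : LinearMap.range A.mulVecLin = ⊤ := by
      apply Submodule.eq_top_of_finrank_eq
      rw [← Matrix.rank, hrankA, Module.finrank_pi, Fintype.card_fin]
    have hsurj : Function.Surjective A.mulVecLin := LinearMap.range_eq_top.mp hrange
    have hinj : Function.Injective A.mulVecLin :=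
      (LinearMap.injective_iff_surjective).mpr hsurj
    exact hinj
  have hAA : A * A⁻¹ = 1 := Matrix.mul_nonsing_inv A hA
  have hAA' : A⁻¹ * A = 1 := Matrix.nonsing_inv_mul A hA
  have hPP' : P⁻¹ * P = 1 := Matrix.nonsing_inv_mul P hP
  have hSS : S * S⁻¹ = 1 := Matrix.mul_nonsing_inv S hS
  -- key factorization : A + σ • P⁻¹ = P⁻¹ * S * A
  have hkey : A + σhat2 • P⁻¹ = P⁻¹ * (S * A) := by
    rw [hSdef, add_mul, Matrix.smul_mul, hAA', mul_add, Matrix.mul_smul, mul_one,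
      ← Matrix.mul_assoc, hPP', Matrix.one_mul]
  have hSA : IsUnit (S * A).det := by rw [Matrix.det_mul]; exact hS.mul hA
  have hPinv : IsUnit P⁻¹.det := by
    exact Matrix.isUnit_nonsing_inv_det P hP
  have hinv : (A + σhat2 • P⁻¹)⁻¹ = A⁻¹ * S⁻¹ * P := by
    rw [hkey, Matrix.mul_inv_rev, Matrix.mul_inv_rev, Matrix.nonsing_inv_nonsing_inv P hP,
      Matrix.mul_assoc]
  -- rewrite the candidate inverse
  have hinv2 : (A + σhat2 • P⁻¹)⁻¹ = A⁻¹ - σhat2 • (A⁻¹ * S⁻¹ * A⁻¹) := by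
    rw [hinv]
    have hPS : P = S - σhat2 • A⁻¹ := by rw [hSdef]; abel
    rw [hPS, mul_sub, Matrix.mul_smul, Matrix.mul_assoc A⁻¹ S⁻¹ S,
      Matrix.nonsing_inv_mul S hS, mul_one]
  -- θ0 + A⁻¹ Φᵀ V = A⁻¹ Φᵀ Y
  have hθ : θ0 + A⁻¹ *ᵥ (Φᵀ *ᵥ V) = A⁻¹ *ᵥ (Φᵀ *ᵥ Y) := by
    rw [hY]
    rw [Matrix.mulVec_add, Matrix.mulVec_add]
    congr 1
    have h1 : Φᵀ *ᵥ (Φ *ᵥ θ0) = A *ᵥ θ0 := by rw [Matrix.mulVec_mulVec, ← hAdef]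
    rw [h1, Matrix.mulVec_mulVec, hAA', Matrix.one_mulVec]
  have hNne : (N : ℝ) ≠ 0 := Nat.cast_ne_zero.mpr hN.ne'
  rw [hinv2, Matrix.sub_mulVec, hθ, Matrix.smul_mulVec]
  congr 1
  rw [smul_mul_assoc, Matrix.smul_mulVec, smul_smul, Matrix.mulVec_mulVec,
    Matrix.mulVec_mulVec]
  have hsc : (N : ℝ)⁻¹ * σhat2 * (N : ℝ) = σhat2 := by field_simp
  rw [hsc]
  simp only [Matrix.mulVec_mulVec, Matrix.mul_assoc]
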